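/- Let 1 < q < p < 2. Define f_λ(x) = x^q + (1−x)^q − λ(x^p + (1−x)^p) on [0, 1/2]. If λ ≤ λ_min := (q(q−1))/(p(p−1)) · 2^{p−q}, then the minimum of f_λ on [0,1/2] is attained at x = 1/2; if λ ≥ λ_max := q/p, then the minimum is attained at x = 0. -/

import Mathlib

open Real Set

lemma entropy_aux {a : ℝ} (h0 : 0 < a) (h2 : a ≤ 1/2) :
    Real.negMulLog (1 - a) ≤ Real.negMulLog a := by
  set h : ℝ → ℝ := fun x => Real.negMulLog x - Real.negMulLog (1 - x) with hh
  have hcont : Continuous h := by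
    apply Real.continuous_negMulLog.sub
    exact Real.continuous_negMulLog.comp (continuous_const.sub continuous_id)
  have hder : ∀ x : ℝ, 0 < x → x < 1 →
      HasDerivAt h (-Real.log x - 1 - (Real.log (1 - x) + 1)) x := by
    intro x hx0 hx1
    have h1 : HasDerivAt Real.negMulLog (-Real.log x - 1) x :=
      Real.hasDerivAt_negMulLog hx0.ne'
    have h2' : HasDerivAt (fun y : ℝ => Real.negMulLog (1 - y))
        ((-Real.log (1 - x) - 1) * (-1)) x := by
      exact (Real.hasDerivAt_negMulLog (by linarith : (1:ℝ) - x ≠ 0)).comp x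
        ((hasDerivAt_id x).const_sub 1)
    have := h1.sub h2'
    refine this.congr_deriv ?_
    ring
  -- threshold
  set s : ℝ := Real.sqrt (1 - 4 * Real.exp (-2)) with hs
  have hexp2 : Real.exp (-2) < 1/4 := by
    have h1 : (2.7182818283 : ℝ) < Real.exp 1 := Real.exp_one_gt_d9
    have h2 : Real.exp 2 = Real.exp 1 * Real.exp 1 := by
      rw [← Real.exp_add]; norm_num
    have h3 : (4:ℝ) < Real.exp 2 := by nlinarith
    have h4 : Real.exp (-2) = (Real.exp 2)⁻¹ := by
      rw [← Real.exp_neg]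
    rw [h4]
    rw [inv_lt_iff_one_lt_mul₀ (by positivity)]  -- guess name
    nlinarith
  have hexp2' : 0 < Real.exp (-2) := Real.exp_pos _
  have hargpos : 0 < 1 - 4 * Real.exp (-2) := by linarith
  have hs2 : s ^ 2 = 1 - 4 * Real.exp (-2) := Real.sq_sqrt hargpos.le
  have hspos : 0 < s := Real.sqrt_pos.mpr hargpos
  have hslt1 : s < 1 := by
    nlinarith [Real.sqrt_nonneg (1 - 4 * Real.exp (-2))]
  set t0 : ℝ := (1 - s) / 2 with ht0
  have ht0pos : 0 < t0 := by rw [ht0]; linarith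
  have ht0lt : t0 < 1/2 := by rw [ht0]; linarith
  have ht0e : t0 * (1 - t0) = Real.exp (-2) := by
    rw [ht0]; nlinarith
  have h0val : h 0 = 0 := by simp [hh]
  have hhalf : h (1/2) = 0 := by norm_num [hh]
  have key : 0 ≤ h a := by
    rcases le_or_gt a t0 with hc | hc
    · -- monotone on [0, t0]
      have hmono : MonotoneOn h (Icc 0 t0) := by
        apply monotoneOn_of_deriv_nonneg (convex_Icc _ _) hcont.continuousOn
        · intro x hx
          rw [interior_Icc] at hx
          exact ((hder x hx.1 (by linarith [hx.2])).differentiableAt).differentiableWithinAt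
        · intro x hx
          rw [interior_Icc] at hx
          rw [(hder x hx.1 (by linarith [hx.2])).deriv]
          have hx1 : x < 1 := by linarith [hx.2]
          have hxx : x * (1 - x) < Real.exp (-2) := by
            rw [← ht0e]; nlinarith [hx.1, hx.2]
          have hlog : Real.log (x * (1 - x)) < -2 := by
            have := Real.log_lt_log (mul_pos hx.1 (by linarith : (0:ℝ) < 1 - x)) hxx
            rwa [Real.log_exp] at this
          rw [Real.log_mul hx.1.ne' (by linarith : (1:ℝ) - x ≠ 0)] at hlog
          linarith
      have := hmono (left_mem_Icc.mpr ht0pos.le) ⟨h0.le, hc⟩ h0.le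
      rw [h0val] at this; exact this
    · -- antitone on [t0, 1/2]
      have hanti : AntitoneOn h (Icc t0 (1/2)) := by
        apply antitoneOn_of_deriv_nonpos (convex_Icc _ _) hcont.continuousOn
        · intro x hx
          rw [interior_Icc] at hx
          exact ((hder x (lt_trans ht0pos hx.1) (by linarith [hx.2])).differentiableAt).differentiableWithinAt
        · intro x hx
          rw [interior_Icc] at hx
          have hx0 : 0 < x := lt_trans ht0pos hx.1
          have hx1 : x < 1 := by linarith [hx.2]
          rw [(hder x hx0 hx1).deriv]
          have hxx : Real.exp (-2) ≤ x * (1 - x) := by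
            rw [← ht0e]; nlinarith [hx.1, hx.2]
          have hlog : -2 ≤ Real.log (x * (1 - x)) := by
            have := Real.log_le_log (Real.exp_pos _) hxx
            rwa [Real.log_exp] at this
          rw [Real.log_mul hx0.ne' (by linarith : (1:ℝ) - x ≠ 0)] at hlog
          linarith
      have := hanti ⟨hc.le, h2⟩ (right_mem_Icc.mpr (by linarith)) h2
      rw [hhalf] at this; exact this
  simpa [hh] using key

lemma core_aux {a s : ℝ} (h0 : 0 < a) (h2 : a ≤ 1/2) (hs0 : 0 ≤ s) (hs1 : s ≤ 1) :
    (1 - a) ^ s * (-Real.log (1 - a)) ≤ a ^ s * (-Real.log a) := by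
  set b : ℝ := 1 - a with hbdef
  have hb0 : 0 < b := by rw [hbdef]; linarith
  have hb1 : b < 1 := by rw [hbdef]; linarith
  have hab : a ≤ b := by rw [hbdef]; linarith
  have hlogb : 0 ≤ -Real.log b := by
    have := Real.log_nonpos hb0.le hb1.le
    linarith
  have hba1 : 1 ≤ b / a := (one_le_div h0).mpr hab
  have hstep1 : b ^ s ≤ a ^ s * (b / a) := by
    have e : b ^ s = a ^ s * (b / a) ^ s := by
      rw [← Real.mul_rpow h0.le (by positivity)]
      congr 1
      field_simp
    rw [e]
    apply mul_le_mul_of_nonneg_left _ (by positivity)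
    calc (b / a) ^ s ≤ (b / a) ^ (1:ℝ) :=
          Real.rpow_le_rpow_of_exponent_le hba1 hs1
      _ = b / a := Real.rpow_one _
  have hstep2 : (b / a) * (-Real.log b) ≤ -Real.log a := by
    have hE : Real.negMulLog b ≤ Real.negMulLog a := entropy_aux h0 h2
    rw [Real.negMulLog, Real.negMulLog] at hE
    rw [div_mul_eq_mul_div, div_le_iff₀ h0]
    nlinarith
  calc b ^ s * (-Real.log b) ≤ (a ^ s * (b / a)) * (-Real.log b) :=
        mul_le_mul_of_nonneg_right hstep1 hlogb
    _ = a ^ s * ((b / a) * (-Real.log b)) := by ring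
    _ ≤ a ^ s * (-Real.log a) := by
        apply mul_le_mul_of_nonneg_left hstep2 (by positivity)

lemma psi_aux {x α β : ℝ} (hx0 : 0 < x) (hx2 : x ≤ 1/2) (hα : 0 < α) (hαβ : α ≤ β)
    (hβ : β ≤ 1) : (1 - x) ^ α - x ^ α ≤ (1 - x) ^ β - x ^ β := by
  set ψ : ℝ → ℝ := fun s => (1 - x) ^ s - x ^ s with hψdef
  have h1x : 0 < 1 - x := by linarith
  have hder : ∀ s : ℝ, HasDerivAt ψ ((1 - x) ^ s * Real.log (1 - x) - x ^ s * Real.log x) s :=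
    fun s => ((Real.hasStrictDerivAt_const_rpow h1x s).hasDerivAt).sub
      ((Real.hasStrictDerivAt_const_rpow hx0 s).hasDerivAt)
  have hmono : MonotoneOn ψ (Icc α β) := by
    apply monotoneOn_of_deriv_nonneg (convex_Icc _ _)
    · exact fun s _ => ((hder s).continuousAt).continuousWithinAt
    · exact fun s _ => ((hder s).differentiableAt).differentiableWithinAt
    · intro s hs
      rw [interior_Icc] at hs
      rw [(hder s).deriv]
      have hcore := core_aux hx0 hx2 (by linarith [hs.1] : (0:ℝ) ≤ s)
        (by linarith [hs.2] : s ≤ 1)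
      nlinarith
  exact hmono (left_mem_Icc.mpr hαβ) (right_mem_Icc.mpr hαβ) hαβ

lemma key_ab {p q a : ℝ} (hq : 1 < q) (hqp : q < p) (hp : p < 2) (ha0 : 0 < a) (ha1 : a ≤ 1) :
    a ^ (p-2) + (2-a) ^ (p-2) ≤ a ^ (q-2) + (2-a) ^ (q-2) := by
  set b : ℝ := 2 - a with hbdef
  have hb1 : 1 ≤ b := by rw [hbdef]; linarith
  have hb0 : 0 < b := by linarith
  have hinv0 : 0 < b⁻¹ := by positivity
  have hinv1 : b⁻¹ ≤ 1 := by
    rw [inv_le_one_iff₀]; right; exact hb1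
  have hainv : a ≤ b⁻¹ := by
    rw [show b⁻¹ = 1 / b by ring, le_div_iff₀ hb0]
    nlinarith
  have echi : ∀ c : ℝ, 0 < c → c ^ (q-2) - c ^ (p-2) = c ^ (q-2) * (1 - c ^ (p-q)) := by
    intro c hc
    rw [mul_sub, mul_one, ← Real.rpow_add hc]
    congr 2
    ring
  have hchi : b⁻¹ ^ (q-2) - b⁻¹ ^ (p-2) ≤ a ^ (q-2) - a ^ (p-2) := by
    rw [echi a ha0, echi _ hinv0]
    apply mul_le_mul
    · exact Real.rpow_le_rpow_of_nonpos ha0 hainv (by linarith)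
    · have : a ^ (p-q) ≤ b⁻¹ ^ (p-q) := Real.rpow_le_rpow ha0.le hainv (by linarith)
      linarith
    · have : b⁻¹ ^ (p-q) ≤ 1 := Real.rpow_le_one hinv0.le hinv1 (by linarith)
      linarith
    · positivity
  have hbinv : ∀ e : ℝ, b⁻¹ ^ e = b ^ (-e) := by
    intro e
    rw [Real.inv_rpow hb0.le, ← Real.rpow_neg hb0.le]
  have hcosh : b ^ (p-2) - b ^ (q-2) ≤ b ^ (-(q-2)) - b ^ (-(p-2)) := by
    have hge : b ^ (q-2) ≤ b ^ (-(p-2)) :=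
      Real.rpow_le_rpow_of_exponent_le hb1 (by linarith)
    have hfac : 1 ≤ b ^ (p-q) := Real.one_le_rpow hb1 (by linarith)
    have e1 : b ^ (q-2) * (b ^ (p-q) - 1) = b ^ (p-2) - b ^ (q-2) := by
      rw [mul_sub, mul_one, ← Real.rpow_add hb0]
      congr 2
      ring
    have e2 : b ^ (-(p-2)) * (b ^ (p-q) - 1) = b ^ (-(q-2)) - b ^ (-(p-2)) := by
      rw [mul_sub, mul_one, ← Real.rpow_add hb0]
      congr 2
      ring
    rw [← e1, ← e2]
    exact mul_le_mul_of_nonneg_right hge (by linarith)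
  rw [hbinv, hbinv] at hchi
  linarith

lemma key1 {p q x : ℝ} (hq : 1 < q) (hqp : q < p) (hp : p < 2) (hx0 : 0 < x) (hx2 : x ≤ 1/2) :
    2 ^ (p-q) * (x ^ (p-2) + (1-x) ^ (p-2)) ≤ x ^ (q-2) + (1-x) ^ (q-2) := by
  have h2x0 : 0 < 2 * x := by linarith
  have h2x1 : 2 * x ≤ 1 := by linarith
  have hmain := key_ab hq hqp hp h2x0 h2x1
  have hsplit : ∀ e : ℝ, x ^ e = (2 * x) ^ e * 2 ^ (-e) ∧ (1 - x) ^ e = (2 - 2*x) ^ e * 2 ^ (-e) := by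
    intro e
    constructor
    · rw [Real.rpow_neg (by norm_num : (0:ℝ) ≤ 2), ← Real.inv_rpow (by norm_num : (0:ℝ) ≤ 2),
        ← Real.mul_rpow (by linarith) (by norm_num)]
      congr 1
      ring
    · rw [Real.rpow_neg (by norm_num : (0:ℝ) ≤ 2), ← Real.inv_rpow (by norm_num : (0:ℝ) ≤ 2),
        ← Real.mul_rpow (by linarith) (by norm_num)]
      congr 1
      ring
  obtain ⟨eq1, eq2⟩ := hsplit (q-2)
  obtain ⟨ep1, ep2⟩ := hsplit (p-2)
  rw [eq1, eq2, ep1, ep2]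
  have hepow : 2 ^ (p-q) * (2:ℝ) ^ (-(p-2)) = 2 ^ (-(q-2)) := by
    rw [← Real.rpow_add (by norm_num : (0:ℝ) < 2)]
    congr 1
    ring
  have hpow0 : (0:ℝ) < 2 ^ (-(q-2)) := Real.rpow_pos_of_pos (by norm_num) _
  calc 2 ^ (p-q) * ((2*x) ^ (p-2) * 2 ^ (-(p-2)) + (2-2*x) ^ (p-2) * 2 ^ (-(p-2)))
      = ((2*x) ^ (p-2) + (2-2*x) ^ (p-2)) * (2 ^ (p-q) * 2 ^ (-(p-2))) := by ring
    _ = ((2*x) ^ (p-2) + (2-2*x) ^ (p-2)) * 2 ^ (-(q-2)) := by rw [hepow]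
    _ ≤ ((2*x) ^ (q-2) + (2-2*x) ^ (q-2)) * 2 ^ (-(q-2)) := by
        apply mul_le_mul_of_nonneg_right _ hpow0.le
        convert hmain using 3 <;> ring
    _ = (2*x) ^ (q-2) * 2 ^ (-(q-2)) + (2-2*x) ^ (q-2) * 2 ^ (-(q-2)) := by ring

lemma hasDerivAt_one_sub_rpow {r x : ℝ} (hx : x ≠ 1) :
    HasDerivAt (fun y : ℝ => (1 - y) ^ r) (-(r * (1 - x) ^ (r - 1))) x := by
  have h := (Real.hasDerivAt_rpow_const (p := r) (Or.inl (by
      intro h; apply hx; linarith [sub_eq_zero.mp h] : (1:ℝ) - x ≠ 0))).comp x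
    ((hasDerivAt_id x).const_sub 1)
  have e : -(r * (1 - x) ^ (r - 1)) = r * (1 - x) ^ (r - 1) * -1 := by ring
  rw [e]
  exact h
lemma cont_mr {r : ℝ} (hr : 0 ≤ r) :
    Continuous (fun y : ℝ => y ^ r + (1 - y) ^ r) :=
  (Real.continuous_rpow_const hr).add
    ((Real.continuous_rpow_const hr).comp (continuous_const.sub continuous_id))

lemma hasDerivAt_mr {r x : ℝ} (hx0 : x ≠ 0) (hx1 : x ≠ 1) :
    HasDerivAt (fun y : ℝ => y ^ r + (1 - y) ^ r)
      (r * x ^ (r - 1) - r * (1 - x) ^ (r - 1)) x := by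
  have h := (Real.hasDerivAt_rpow_const (p := r) (Or.inl hx0)).add
    (hasDerivAt_one_sub_rpow (r := r) hx1)
  have e : r * x ^ (r - 1) - r * (1 - x) ^ (r - 1)
      = r * x ^ (r - 1) + -(r * (1 - x) ^ (r - 1)) := by ring
  rw [e]
  exact h

lemma Phi_nonneg {p q x : ℝ} (hq : 1 < q) (hqp : q < p) (hp : p < 2)
    (hx : x ∈ Icc (0:ℝ) (1/2)) :
    2 ^ (p-q) * (q-1) * ((1-x) ^ (p-1) - x ^ (p-1)) ≤ (p-1) * ((1-x) ^ (q-1) - x ^ (q-1)) := by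
  set Φ : ℝ → ℝ := fun y => (p-1) * ((1-y) ^ (q-1) - y ^ (q-1))
    - 2 ^ (p-q) * (q-1) * ((1-y) ^ (p-1) - y ^ (p-1)) with hΦdef
  have hq1 : (0:ℝ) ≤ q - 1 := by linarith
  have hp1 : (0:ℝ) ≤ p - 1 := by linarith
  have hcont : Continuous Φ := by
    apply Continuous.sub
    · exact continuous_const.mul (((Real.continuous_rpow_const hq1).comp
        (continuous_const.sub continuous_id)).sub (Real.continuous_rpow_const hq1))
    · exact continuous_const.mul (((Real.continuous_rpow_const hp1).comp
        (continuous_const.sub continuous_id)).sub (Real.continuous_rpow_const hp1))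
  have hder : ∀ y ∈ Ioo (0:ℝ) (1/2), HasDerivAt Φ
      (-((p-1) * (q-1)) * ((1-y) ^ (q-2) + y ^ (q-2))
        + 2 ^ (p-q) * (q-1) * (p-1) * ((1-y) ^ (p-2) + y ^ (p-2))) y := by
    intro y hy
    have hy0 : y ≠ 0 := hy.1.ne'
    have hy1 : y ≠ 1 := by have := hy.2; intro h; rw [h] at this; norm_num at this
    have h1 : HasDerivAt (fun z : ℝ => (1-z) ^ (q-1) - z ^ (q-1))
        (-((q-1) * (1-y) ^ (q-1-1)) - (q-1) * y ^ (q-1-1)) y :=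
      (hasDerivAt_one_sub_rpow hy1).sub (Real.hasDerivAt_rpow_const (Or.inl hy0))
    have h2 : HasDerivAt (fun z : ℝ => (1-z) ^ (p-1) - z ^ (p-1))
        (-((p-1) * (1-y) ^ (p-1-1)) - (p-1) * y ^ (p-1-1)) y :=
      (hasDerivAt_one_sub_rpow hy1).sub (Real.hasDerivAt_rpow_const (Or.inl hy0))
    have h := (h1.const_mul (p-1)).sub (h2.const_mul (2 ^ (p-q) * (q-1)))
    refine h.congr_deriv ?_
    have e1 : q - 1 - 1 = q - 2 := by ring
    have e2 : p - 1 - 1 = p - 2 := by ring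
    rw [e1, e2]
    ring
  have hanti : AntitoneOn Φ (Icc (0:ℝ) (1/2)) := by
    apply antitoneOn_of_deriv_nonpos (convex_Icc _ _) hcont.continuousOn
    · intro y hy
      rw [interior_Icc] at hy
      exact ((hder y hy).differentiableAt).differentiableWithinAt
    · intro y hy
      rw [interior_Icc] at hy
      rw [(hder y hy).deriv]
      have hk := key1 hq hqp hp hy.1 hy.2.le
      have hm := mul_le_mul_of_nonneg_left hk (mul_nonneg hp1 hq1)
      nlinarith [hm]
  have hval : Φ (1/2) = 0 := by
    simp only [hΦdef]
    norm_num
  have := hanti hx (right_mem_Icc.mpr (by norm_num)) hx.2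
  rw [hval] at this
  simp only [hΦdef] at this
  linarith

lemma F_antitone {p q c : ℝ} (hq : 1 < q) (hqp : q < p) (hp : p < 2)
    (hc : c * (p * (p-1)) = q * (q-1) * 2 ^ (p-q)) :
    AntitoneOn (fun y : ℝ => y ^ q + (1-y) ^ q - c * (y ^ p + (1-y) ^ p))
      (Icc (0:ℝ) (1/2)) := by
  have hq0 : (0:ℝ) ≤ q := by linarith
  have hp0 : (0:ℝ) ≤ p := by linarith
  apply antitoneOn_of_deriv_nonpos (convex_Icc _ _)
    (((cont_mr hq0).sub (continuous_const.mul (cont_mr hp0))).continuousOn)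
  · intro y hy
    rw [interior_Icc] at hy
    have hy0 : y ≠ 0 := hy.1.ne'
    have hy1 : y ≠ 1 := by have := hy.2; intro h; rw [h] at this; norm_num at this
    exact (((hasDerivAt_mr hy0 hy1).sub
      ((hasDerivAt_mr hy0 hy1).const_mul c)).differentiableAt).differentiableWithinAt
  · intro y hy
    rw [interior_Icc] at hy
    have hy0 : y ≠ 0 := hy.1.ne'
    have hy1 : y ≠ 1 := by have := hy.2; intro h; rw [h] at this; norm_num at this
    have hd := ((hasDerivAt_mr (r := q) hy0 hy1).sub
      ((hasDerivAt_mr (r := p) hy0 hy1).const_mul c))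
    erw [hd.deriv]
    have hΦ := Phi_nonneg hq hqp hp (mem_Icc.mpr ⟨hy.1.le, hy.2.le⟩)
    set A1 : ℝ := (1-y) ^ (q-1) - y ^ (q-1) with hA1
    set B1 : ℝ := (1-y) ^ (p-1) - y ^ (p-1) with hB1
    have hB1nn : 0 ≤ B1 := by
      have : y ^ (p-1) ≤ (1-y) ^ (p-1) :=
        Real.rpow_le_rpow hy.1.le (by linarith [hy.2]) (by linarith)
      simp only [hB1]; linarith
    have hgoal : c * p * B1 ≤ q * A1 := by
      have hcc : c * p * (p-1) = q * (q-1) * 2 ^ (p-q) := by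
        rw [show c * p * (p-1) = c * (p * (p-1)) by ring, hc]
      have h1 : c * p * B1 * (p-1) = q * (q-1) * 2 ^ (p-q) * B1 := by
        linear_combination B1 * hcc
      have h2 := mul_le_mul_of_nonneg_left hΦ hq0
      have h3 : c * p * B1 * (p-1) ≤ q * A1 * (p-1) := by
        rw [h1]; nlinarith [h2]
      have hp1pos : (0:ℝ) < p - 1 := by linarith
      exact le_of_mul_le_mul_right h3 hp1pos
    rw [hA1, hB1] at hgoal
    nlinarith [hgoal]

lemma G_monotone {p q : ℝ} (hq : 1 < q) (hqp : q < p) (hp : p < 2) :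
    MonotoneOn (fun y : ℝ => p * (y ^ q + (1-y) ^ q) - q * (y ^ p + (1-y) ^ p))
      (Icc (0:ℝ) (1/2)) := by
  have hq0 : (0:ℝ) ≤ q := by linarith
  have hp0 : (0:ℝ) ≤ p := by linarith
  apply monotoneOn_of_deriv_nonneg (convex_Icc _ _)
    (((continuous_const.mul (cont_mr hq0)).sub
      (continuous_const.mul (cont_mr hp0))).continuousOn)
  · intro y hy
    rw [interior_Icc] at hy
    have hy0 : y ≠ 0 := hy.1.ne'
    have hy1 : y ≠ 1 := by have := hy.2; intro h; rw [h] at this; norm_num at this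
    exact ((((hasDerivAt_mr hy0 hy1).const_mul p).sub
      ((hasDerivAt_mr hy0 hy1).const_mul q)).differentiableAt).differentiableWithinAt
  · intro y hy
    rw [interior_Icc] at hy
    have hy0 : y ≠ 0 := hy.1.ne'
    have hy1 : y ≠ 1 := by have := hy.2; intro h; rw [h] at this; norm_num at this
    have hd := (((hasDerivAt_mr (r := q) hy0 hy1).const_mul p).sub
      ((hasDerivAt_mr (r := p) hy0 hy1).const_mul q))
    erw [hd.deriv]
    have hψ := psi_aux hy.1 hy.2.le (by linarith : (0:ℝ) < q - 1)
      (by linarith : q - 1 ≤ p - 1) (by linarith : p - 1 ≤ 1)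
    have hm := mul_le_mul_of_nonneg_left hψ
      (le_of_lt (mul_pos (show (0:ℝ) < p by linarith) (show (0:ℝ) < q by linarith)))
    nlinarith [hm]

lemma midpoint_le {r x : ℝ} (hr : 1 ≤ r) (hx0 : 0 ≤ x) (hx1 : x ≤ 1) :
    2 * (2⁻¹ : ℝ) ^ r ≤ x ^ r + (1-x) ^ r := by
  have h := (convexOn_rpow hr).2 (mem_Ici.mpr hx0)
    (mem_Ici.mpr (by linarith : (0:ℝ) ≤ 1 - x))
    (by norm_num : (0:ℝ) ≤ 1/2) (by norm_num : (0:ℝ) ≤ 1/2) (by norm_num)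
  simp only [smul_eq_mul] at h
  have e : (1/2 : ℝ) * x + 1/2 * (1-x) = 2⁻¹ := by ring
  rw [e] at h
  linarith

lemma sum_rpow_le_one {r x : ℝ} (hr : 1 ≤ r) (hx0 : 0 ≤ x) (hx1 : x ≤ 1) :
    x ^ r + (1-x) ^ r ≤ 1 := by
  have h1 : ∀ y : ℝ, 0 ≤ y → y ≤ 1 → y ^ r ≤ y := by
    intro y hy0 hy1
    rcases eq_or_lt_of_le hy0 with h | h
    · rw [← h, Real.zero_rpow (by linarith : r ≠ 0)]
    · calc y ^ r ≤ y ^ (1:ℝ) := Real.rpow_le_rpow_of_exponent_ge h hy1 hr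
        _ = y := Real.rpow_one y
  have := h1 x hx0 hx1
  have := h1 (1-x) (by linarith) (by linarith)
  linarith

/-- Case `s > 2` of Lemma: with `1 < q < p < 2`, the minimum of
`f_λ(x) = x^q + (1-x)^q - λ(x^p + (1-x)^p)` on `[0,1/2]` is attained at `x = 1/2`
when `λ ≤ λ_min = (q(q-1))/(p(p-1))·2^(p-q)`, and at `x = 0` when `λ ≥ λ_max = q/p`. -/
theorem min_f_smooth_transition_endpoints
    (p q lam : ℝ) (hq : 1 < q) (hqp : q < p) (hp : p < 2) (hlam : 0 ≤ lam)
    (f : ℝ → ℝ)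
    (hf : ∀ x, f x = x ^ q + (1 - x) ^ q - lam * (x ^ p + (1 - x) ^ p))
    (lamMin lamMax : ℝ)
    (hmin : lamMin = (q * (q - 1)) / (p * (p - 1)) * 2 ^ (p - q))
    (hmax : lamMax = q / p) :
    (lam ≤ lamMin → ∀ x ∈ Icc (0 : ℝ) (1/2), f (1/2) ≤ f x) ∧
    (lamMax ≤ lam → ∀ x ∈ Icc (0 : ℝ) (1/2), f 0 ≤ f x) := by
  have hp0 : (0:ℝ) < p := by linarith
  have hq0 : (0:ℝ) < q := by linarith
  have hp1 : (0:ℝ) < p - 1 := by linarith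
  constructor
  · -- min at 1/2
    intro hl x hx
    have hc : lamMin * (p * (p-1)) = q * (q-1) * 2 ^ (p-q) := by
      rw [hmin]
      field_simp
    have hF := F_antitone hq hqp hp hc
    have hFx := hF hx (right_mem_Icc.mpr (by norm_num)) hx.2
    simp only [] at hFx
    rw [hf x, hf (1/2)]
    have hB := midpoint_le (le_of_lt (lt_trans hq hqp)) hx.1 (by linarith [hx.2])
    have hmul : 0 ≤ (lamMin - lam) * ((x ^ p + (1-x) ^ p) - 2 * (2⁻¹:ℝ) ^ p) :=
      mul_nonneg (by linarith) (by linarith)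
    have e2 : (1:ℝ) - 1/2 = 2⁻¹ := by norm_num
    have e3 : (1/2:ℝ) = 2⁻¹ := by norm_num
    rw [e2, e3] at hFx ⊢
    nlinarith [hFx, hmul]
  · -- min at 0
    intro hl x hx
    have hG := G_monotone hq hqp hp
    have hGx := hG (left_mem_Icc.mpr (by norm_num)) hx hx.1
    simp only [] at hGx
    have hz : ∀ r : ℝ, 0 < r → (0:ℝ) ^ r = 0 := fun r hr => Real.zero_rpow hr.ne'
    rw [hz q hq0, hz p hp0] at hGx
    norm_num [Real.one_rpow] at hGx
    -- hGx : p - q ≤ p * (x^q + (1-x)^q) - q * (x^p + (1-x)^p)  (roughly)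
    rw [hf x, hf 0]
    rw [hz q hq0, hz p hp0]
    norm_num [Real.one_rpow]
    -- goal : 1 - lam ≤ x^q + (1-x)^q - lam * (x^p + (1-x)^p)
    have hMp := sum_rpow_le_one (le_of_lt (lt_trans hq hqp)) hx.1 (by linarith [hx.2])
    have hlam' : q / p ≤ lam := by rw [← hmax]; exact hl
    have h1 : lam * ((x ^ p + (1-x) ^ p) - 1) ≤ (q / p) * ((x ^ p + (1-x) ^ p) - 1) :=
      mul_le_mul_of_nonpos_right hlam' (by linarith)
    have h2 : (q / p) * ((x ^ p + (1-x) ^ p) - 1) ≤ (x ^ q + (1-x) ^ q) - 1 := by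
      rw [div_mul_eq_mul_div, div_le_iff₀ hp0]
      nlinarith [hGx]
    nlinarith [h1, h2]
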